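/- Let α = s + t·τ + u·τ² + v·τ³ ∈ R with s, t, u, v ∈ ℤ. Then τ divides α in R if and only if 4 divides s. -/

import Mathlib

open Polynomial

noncomputable def P (μ : ℤ) : ℤ[X] := X ^ 4 - C μ * X ^ 3 - C (2 * μ) * X + 4

noncomputable abbrev Rg (μ : ℤ) := AdjoinRoot (P μ)

noncomputable def tau (μ : ℤ) : Rg μ := AdjoinRoot.root (P μ)

lemma key (μ : ℤ) : tau μ ^ 4 - (μ : Rg μ) * tau μ ^ 3 - (2 * μ : ℤ) * tau μ + 4 = 0 := by
  have h := AdjoinRoot.eval₂_root (P μ)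
  have e : eval₂ (AdjoinRoot.of (P μ)) (AdjoinRoot.root (P μ)) (P μ)
      = eval₂ (AdjoinRoot.of (P μ)) (AdjoinRoot.root (P μ)) (X ^ 4 - C μ * X ^ 3 - C (2 * μ) * X + 4) := rfl
  rw [e] at h
  simp only [eval₂_add, eval₂_sub, eval₂_mul, eval₂_pow, eval₂_X, eval₂_C,
    eval₂_ofNat] at h
  exact h

lemma tau_dvd_four (μ : ℤ) : tau μ ∣ (4 : Rg μ) := by
  refine ⟨(μ : Rg μ) * tau μ ^ 2 + (2 * μ : ℤ) - tau μ ^ 3, ?_⟩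
  have h := key μ
  push_cast at h ⊢
  linear_combination h

noncomputable def phi (μ : ℤ) : Rg μ →+* ZMod 4 :=
  AdjoinRoot.lift (Int.castRingHom (ZMod 4)) 0 (by
    simp [P, eval₂_add, eval₂_sub, eval₂_mul, eval₂_pow, eval₂_X, eval₂_C]
    decide)

lemma phi_tau (μ : ℤ) : phi μ (tau μ) = 0 := AdjoinRoot.lift_root _

lemma phi_int (μ : ℤ) (n : ℤ) : phi μ (n : Rg μ) = (n : ZMod 4) := by
  simp [phi]

/-- Divisibility by τ: for `α = s + t·τ + u·τ² + v·τ³` with integer coefficients,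
`τ ∣ α` in `R` if and only if `4 ∣ s`. -/
theorem stmt0 (μ : ℤ) (hμ : μ = 1 ∨ μ = -1) (s t u v : ℤ) :
    tau μ ∣ ((s : Rg μ) + (t : Rg μ) * tau μ + (u : Rg μ) * tau μ ^ 2
      + (v : Rg μ) * tau μ ^ 3) ↔ (4 : ℤ) ∣ s := by
  constructor
  · rintro ⟨c, hc⟩
    have := congrArg (phi μ) hc
    simp [map_add, map_mul, map_pow, phi_tau, phi_int] at this
    exact (ZMod.intCast_zmod_eq_zero_iff_dvd s 4).mp this
  · rintro ⟨k, rfl⟩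
    obtain ⟨c, hc⟩ := tau_dvd_four μ
    refine ⟨(k : Rg μ) * c + t + (u : Rg μ) * tau μ + (v : Rg μ) * tau μ ^ 2, ?_⟩
    push_cast
    rw [show (4 : Rg μ) * k = (k : Rg μ) * 4 by ring, show (4 : Rg μ) = tau μ * c from hc]
    ring
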